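/- Let X = {1,2,3,4} and S = {f,g,h,j} ⊆ End(X) where f = (1↦1,2↦1,3↦3,4↦3), g = (1↦2,2↦2,3↦3,4↦3), h = (1↦1,2↦1,3↦4,4↦4), j = (1↦2,2↦2,3↦4,4↦4). Then m ∘ n = m for all m,n ∈ S (so S is a left-zero band of transformations), and S has no unrepresentation: there is no bijection φ : X → S with φ(m(x)) = m ∘ φ(x) for all m ∈ S, x ∈ X. -/

import Mathlib

/-- The left-zero band S = {f,g,h,j} of transformations of a 4-element set
satisfies m ∘ n = m for all m, n ∈ S, but has no unrepresentation. -/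
theorem stmt10 :
    let f : Fin 4 → Fin 4 := ![0, 0, 2, 2]
    let g : Fin 4 → Fin 4 := ![1, 1, 2, 2]
    let h : Fin 4 → Fin 4 := ![0, 0, 3, 3]
    let j : Fin 4 → Fin 4 := ![1, 1, 3, 3]
    let S : Set (Fin 4 → Fin 4) := {f, g, h, j}
    (∀ m ∈ S, ∀ n ∈ S, m ∘ n = m) ∧
    ¬ ∃ φ : Fin 4 → (Fin 4 → Fin 4), Function.Injective φ ∧ Set.range φ = S ∧
        ∀ m ∈ S, ∀ x, φ (m x) = m ∘ φ x := by
  intro f g h j S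
  have hband : ∀ m ∈ S, ∀ n ∈ S, m ∘ n = m := by
    intro m hm n hn
    rcases hm with rfl | rfl | rfl | rfl <;>
      rcases hn with rfl | rfl | rfl | rfl <;>
        · funext x; fin_cases x <;> rfl
  refine ⟨hband, ?_⟩
  rintro ⟨φ, hinj, hrange, hφ⟩
  have hfS : f ∈ S := Or.inl rfl
  have hmem : ∀ x, φ x ∈ S := fun x => hrange ▸ Set.mem_range_self x
  have h0 : φ 0 = f := by
    have := hφ f hfS 0
    simpa [hband f hfS (φ 0) (hmem 0)] using this.symm ▸ (hband f hfS (φ 0) (hmem 0))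
  have h2 : φ 2 = f := by
    have e := hφ f hfS 2
    rw [hband f hfS (φ 2) (hmem 2)] at e
    simpa [f] using e
  have : (0 : Fin 4) = 2 := hinj (h0.trans h2.symm)
  exact absurd this (by decide)
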